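/- For n > 0, the congruence ∑_{k=0}^{n-1} (-1)^k q^{-binom(k,2)} C_k^q ≡ F_n^q(q) + F_{n+2}^q(1) - 2 holds modulo Φ_n(q), where the left side is interpreted after multiplying by a suitable power of q (i.e., q^{-binom(k,2)} is taken modulo Φ_n(q) using q^n ≡ 1). -/

import Mathlib

open Polynomial Finset

/-- The Gaussian (q-)binomial coefficient as a polynomial in `ℤ[q]`
(via the standard Pascal recursion `[n+1,k+1] = [n,k] + q^(k+1)·[n,k+1]`). -/
noncomputable def gbinom : ℕ → ℕ → Polynomial ℤ
  | _, 0 => 1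
  | 0, _ + 1 => 0
  | n + 1, k + 1 => gbinom n k + Polynomial.X ^ (k + 1) * gbinom n (k + 1)

/-- The q-Catalan number `C_k^q = [2k, k]_q - q·[2k, k+1]_q`. -/
noncomputable def qCatalan (k : ℕ) : Polynomial ℤ :=
  gbinom (2 * k) k - Polynomial.X * gbinom (2 * k) (k + 1)

/-- The q-Fibonacci polynomial `F_n^q(t)` in `ℤ[q]`, at a value `t ∈ ℤ[q]`:
`F 0 = 0`, `F 1 = 1`, `F (n+2) = F (n+1) + q^n · t · F n`. -/
noncomputable def qFibAt (t : Polynomial ℤ) : ℕ → Polynomial ℤ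
  | 0 => 0
  | 1 => 1
  | n + 2 => qFibAt t (n + 1) + Polynomial.X ^ n * t * qFibAt t n

/-- For `n > 0`:
`∑_{k=0}^{n-1} (-1)^k q^(-C(k,2)) C_k^q ≡ F_n^q(q) + F_{n+2}^q(1) - 2 (mod Φ_n(q))`,
where the negative power `q^(-C(k,2))` is interpreted as `q^((n-1)·C(k,2))`,
using `q^n ≡ 1 (mod Φ_n(q))`. -/
lemma gbinom_zero (m : ℕ) : gbinom m 0 = 1 := by cases m <;> rfl
lemma gbinom_succ (m k : ℕ) :
    gbinom (m+1) (k+1) = gbinom m k + X ^ (k+1) * gbinom m (k+1) := rfl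
lemma gbinom_big : ∀ {m k : ℕ}, m < k → gbinom m k = 0 := by
  intro m
  induction m with
  | zero => intro k hk; match k, hk with
            | k+1, _ => rfl
  | succ m ih =>
      intro k hk
      match k, hk with
      | k+1, hk => rw [gbinom_succ, ih (by omega), ih (by omega)]; ring
lemma gbinom_diag : ∀ m : ℕ, gbinom m m = 1 := by
  intro m
  induction m with
  | zero => rfl
  | succ m ih => rw [gbinom_succ, ih, gbinom_big (by omega)]; ring

lemma gbinom_prod : ∀ k a : ℕ,
    gbinom (k + a) k * ∏ j ∈ range k, (X ^ (j+1) - 1) =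
      ∏ j ∈ range k, ((X : Polynomial ℤ) ^ (a+j+1) - 1) := by
  intro k
  induction k with
  | zero => intro a; simp [gbinom_zero]
  | succ k ihk =>
      intro a
      induction a with
      | zero =>
          rw [Nat.add_zero, gbinom_diag, one_mul]
          exact Finset.prod_congr rfl (by intro j hj; norm_num)
      | succ a iha =>
          have h1 : k + 1 + (a + 1) = (k + (a+1)) + 1 := by omega
          rw [h1, gbinom_succ, prod_range_succ, ← mul_assoc, add_mul, add_mul]
          have hA : ∀ b : ℕ, (∏ j ∈ range k, ((X : Polynomial ℤ) ^ (b+1+j+1) - 1)) =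
              ∏ j ∈ range k, ((X : Polynomial ℤ) ^ (b+j+2) - 1) :=
            fun b => Finset.prod_congr rfl fun j _ => by rw [show b+1+j+1 = b+j+2 from by omega]
          have e1 : gbinom (k + (a+1)) k * (∏ j ∈ range k, (X ^ (j+1) - 1)) =
              ∏ j ∈ range k, ((X : Polynomial ℤ) ^ (a+j+2) - 1) := by
            rw [ihk (a+1)]; exact hA a
          have e2 : gbinom (k + (a+1)) (k+1) * ∏ j ∈ range (k+1), (X ^ (j+1) - 1) =
              (∏ j ∈ range k, ((X : Polynomial ℤ) ^ (a+j+2) - 1)) * (X ^ (a+1) - 1) := by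
            rw [show k + (a+1) = k + 1 + a from by omega, iha, prod_range_succ',
              show a+0+1 = a+1 from by omega]
            exact congrArg (· * ((X : Polynomial ℤ) ^ (a+1) - 1))
              (Finset.prod_congr rfl fun j _ => by rw [show a+(j+1)+1 = a+j+2 from by omega])
          have e3 : ∏ j ∈ range (k+1), ((X : Polynomial ℤ) ^ (a+1+j+1) - 1) =
              (∏ j ∈ range k, ((X : Polynomial ℤ) ^ (a+j+2) - 1)) * (X ^ (a+k+2) - 1) := by
            rw [prod_range_succ, hA a, show a+1+k+1 = a+k+2 from by omega]
          calc gbinom (k + (a+1)) k * (∏ x ∈ range k, (X ^ (x+1) - 1)) * (X ^ (k+1) - 1) +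
              X ^ (k+1) * gbinom (k + (a+1)) (k+1) * (∏ x ∈ range k, (X ^ (x+1) - 1)) * (X ^ (k+1) - 1)
              = (∏ j ∈ range k, ((X : Polynomial ℤ) ^ (a+j+2) - 1)) * (X ^ (k+1) - 1) +
                X ^ (k+1) * ((∏ j ∈ range k, ((X : Polynomial ℤ) ^ (a+j+2) - 1)) * (X ^ (a+1) - 1)) := by
                rw [e1]
                congr 1
                rw [mul_assoc, mul_assoc, ← prod_range_succ (fun j => (X : Polynomial ℤ) ^ (j+1) - 1), e2]
            _ = (∏ j ∈ range k, ((X : Polynomial ℤ) ^ (a+j+2) - 1)) * (X ^ (a+k+2) - 1) := by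
                ring_nf
            _ = ∏ j ∈ range (k+1), ((X : Polynomial ℤ) ^ (a+1+j+1) - 1) := e3.symm

lemma prodX_ne (k : ℕ) : (∏ j ∈ range k, ((X : Polynomial ℤ) ^ (j+1) - 1)) ≠ 0 := by
  apply Finset.prod_ne_zero_iff.mpr
  intro j _ h
  have h2 := congrArg (Polynomial.eval 0) h
  simp [zero_pow] at h2

lemma gbinom_mirror (k b : ℕ) :
    gbinom (k+1+b) (k+1) = gbinom (k+b) (k+1) + X ^ b * gbinom (k+b) k := by
  cases b with
  | zero => simp [gbinom_diag, gbinom_big (show k < k+1 by omega)]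
  | succ b =>
      apply mul_right_cancel₀ (prodX_ne (k+1))
      set P : Polynomial ℤ := ∏ j ∈ range k, ((X : Polynomial ℤ) ^ (b+1+j+1) - 1) with hP
      set D : Polynomial ℤ := ∏ j ∈ range (k+1), ((X : Polynomial ℤ) ^ (j+1) - 1) with hDdef
      set Dk : Polynomial ℤ := ∏ j ∈ range k, ((X : Polynomial ℤ) ^ (j+1) - 1) with hDk
      have hD : D = Dk * (X ^ (k+1) - 1) := prod_range_succ _ _
      have hA : gbinom (k+1+(b+1)) (k+1) * D = P * (X ^ (b+1) * X ^ (k+1) - 1) := by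
        rw [gbinom_prod (k+1) (b+1), prod_range_succ, hP,
          show b+1+k+1 = (b+1)+(k+1) from by omega, pow_add]
      have hB : gbinom (k+(b+1)) (k+1) * D = P * (X ^ (b+1) - 1) := by
        rw [show k+(b+1) = (k+1)+b from by omega, gbinom_prod (k+1) b,
          prod_range_succ' (fun j => (X : Polynomial ℤ) ^ (b+j+1) - 1) k,
          show b+0+1 = b+1 from by omega, hP]
        exact congrArg (· * ((X : Polynomial ℤ) ^ (b+1) - 1))
          (Finset.prod_congr rfl fun j _ => by rw [show b+(j+1)+1 = b+1+j+1 from by omega])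
      have hC : gbinom (k+(b+1)) k * Dk = P := by
        rw [show k+(b+1) = k+(b+1) from rfl, gbinom_prod k (b+1), hP]
      linear_combination hA - hB - X ^ (b+1) * (X ^ (k+1) - 1) * hC
        - X ^ (b+1) * (gbinom (k+(b+1)) k) * hD

lemma gbinom_symm : ∀ m k, k ≤ m → gbinom m (m - k) = gbinom m k := by
  intro m
  induction m with
  | zero => intro k hk; interval_cases k; rfl
  | succ m ih =>
      intro k hk
      match k with
      | 0 => rw [Nat.sub_zero, gbinom_diag, gbinom_zero]
      | k+1 =>
        rcases Nat.lt_or_ge k m with hkm | hkm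
        · have hm : gbinom (m+1) ((m-k-1)+1) = gbinom m ((m-k-1)+1) + X ^ (k+1) * gbinom m (m-k-1) := by
            have h2 := gbinom_mirror (m-k-1) (k+1)
            rw [show m-k-1+1+(k+1) = m+1 from by omega, show m-k-1+(k+1) = m from by omega] at h2
            exact h2
          rw [show m + 1 - (k+1) = (m-k-1)+1 from by omega, hm, gbinom_succ m k,
            show (m-k-1)+1 = m - k from by omega, ih k (by omega),
            show m-k-1 = m - (k+1) from by omega, ih (k+1) (by omega)]
        · have hk1 : k = m := by omega
          subst hk1
          rw [Nat.sub_self, gbinom_zero, gbinom_diag]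

lemma qFib_expand : ∀ m (t : Polynomial ℤ),
    qFibAt t (m+1) = ∑ k ∈ range (m+1), X ^ (k*k) * t ^ k * gbinom (m-k) k := by
  intro m
  induction m using Nat.strong_induction_on with
  | _ m ih =>
    match m with
    | 0 => intro t; simp [qFibAt, gbinom_zero]
    | 1 =>
        intro t
        show (1 : Polynomial ℤ) + X ^ 0 * t * 0 = _
        rw [sum_range_succ, sum_range_one]
        simp [gbinom_zero, gbinom_big (show 0 < 1 by omega)]
    | (m+2) =>
        intro t
        show qFibAt t (m+2) + X ^ (m+1) * t * qFibAt t (m+1) = _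
        calc qFibAt t (m+2) + X ^ (m+1) * t * qFibAt t (m+1)
            = (∑ k ∈ range (m+2), X ^ (k*k) * t ^ k * gbinom (m+1-k) k)
              + ∑ k ∈ range (m+1), X ^ (m+1) * t * (X ^ (k*k) * t ^ k * gbinom (m-k) k) := by
              rw [ih (m+1) (by omega) t, ih m (by omega) t, mul_sum]
          _ = ((∑ k ∈ range (m+1), X ^ ((k+1)*(k+1)) * t ^ (k+1) * gbinom (m+1-(k+1)) (k+1)) + 1)
              + ∑ k ∈ range (m+1), X ^ (m+1) * t * (X ^ (k*k) * t ^ k * gbinom (m-k) k) := by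
              rw [sum_range_succ' (fun k => X ^ (k*k) * t ^ k * gbinom (m+1-k) k) (m+1)]
              norm_num [gbinom_zero]
          _ = (∑ k ∈ range (m+1), (X ^ ((k+1)*(k+1)) * t ^ (k+1) * gbinom (m+1-(k+1)) (k+1)
                + X ^ (m+1) * t * (X ^ (k*k) * t ^ k * gbinom (m-k) k))) + 1 := by
              rw [sum_add_distrib]; ring
          _ = (∑ k ∈ range (m+1), X ^ ((k+1)*(k+1)) * t ^ (k+1) * gbinom (m+2-(k+1)) (k+1)) + 1 := by
              refine congrArg (· + 1) (sum_congr rfl fun k hk => ?_)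
              rcases le_or_gt (2*k) m with h2k | h2k
              · rw [show m+2-(k+1) = k+1+(m-2*k) from by omega, gbinom_mirror k (m-2*k),
                  show k+(m-2*k) = m - k from by omega, show m+1-(k+1) = m-k from by omega]
                rw [show (X : Polynomial ℤ) ^ (m+1) * t * (X ^ (k*k) * t ^ k * gbinom (m-k) k)
                  = X ^ ((k+1)*(k+1)) * t ^ (k+1) * (X ^ (m-2*k) * gbinom (m-k) k) from by
                    rw [show (k+1)*(k+1) = k*k+(2*k+1) from by ring, show m+1 = (m-2*k) + (2*k+1) from by omega]
                    rw [pow_add, pow_add, pow_succ]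
                    ring]
                ring
              · rw [gbinom_big (show m+2-(k+1) < k+1 by omega),
                  gbinom_big (show m+1-(k+1) < k+1 by omega),
                  gbinom_big (show m-k < k by omega)]
                ring
          _ = (∑ k ∈ range (m+2), X ^ ((k+1)*(k+1)) * t ^ (k+1) * gbinom (m+2-(k+1)) (k+1)) + 1 := by
              rw [sum_range_succ (fun k => X ^ ((k+1)*(k+1)) * t ^ (k+1) * gbinom (m+2-(k+1)) (k+1)) (m+1),
                gbinom_big (show m+2-(m+1+1) < m+1+1 by omega)]
              ring
          _ = ∑ k ∈ range (m+2+1), X ^ (k*k) * t ^ k * gbinom (m+2-k) k := by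
              rw [sum_range_succ' (fun k => X ^ (k*k) * t ^ k * gbinom (m+2-k) k) (m+2)]
              norm_num [gbinom_zero]

section Root
variable {n : ℕ} {ζ : ℂ}

lemma cD_ne (hζ : IsPrimitiveRoot ζ n) {k : ℕ} (hk : k < n) :
    (∏ j ∈ range k, (ζ ^ (j+1) - 1)) ≠ 0 := by
  apply Finset.prod_ne_zero_iff.mpr
  intro j hj
  have hj' := mem_range.mp hj
  exact sub_ne_zero.mpr (hζ.pow_ne_one_of_pos_of_lt (by omega) (by omega))

lemma cProd (ζ : ℂ) (k a : ℕ) :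
    (aeval ζ (gbinom (k+a) k)) * ∏ j ∈ range k, (ζ ^ (j+1) - 1)
      = ∏ j ∈ range k, (ζ ^ (a+j+1) - 1) := by
  have h := congrArg (aeval ζ) (gbinom_prod k a)
  simpa using h

lemma zflip (hζ : IsPrimitiveRoot ζ n) (K c b : ℕ) (h : b + c + 1 = n) (hK : K ≤ c + 1) :
    ζ ^ (∑ j ∈ range K, (c - j)) * ∏ j ∈ range K, (ζ ^ (b+j+1) - 1)
      = (-1) ^ K * ∏ j ∈ range K, (ζ ^ (c+1-K+j) - 1) := by
  calc ζ ^ (∑ j ∈ range K, (c-j)) * ∏ j ∈ range K, (ζ ^ (b+j+1) - 1)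
      = ∏ j ∈ range K, (ζ ^ (c-j) * (ζ ^ (b+j+1) - 1)) := by
        rw [prod_mul_distrib, Finset.prod_pow_eq_pow_sum]
    _ = ∏ j ∈ range K, (-(ζ ^ (c-j) - 1)) := by
        refine prod_congr rfl fun j hj => ?_
        have hj' := mem_range.mp hj
        have h1 : ζ ^ (c-j) * ζ ^ (b+j+1) = 1 := by
          rw [← pow_add, show c-j+(b+j+1) = n from by omega, hζ.pow_eq_one]
        linear_combination h1
    _ = (-1) ^ K * ∏ j ∈ range K, (ζ ^ (c-j) - 1) := by
        have hh : ∀ j ∈ range K, (-(ζ ^ (c-j) - 1)) = (-1) * (ζ ^ (c-j) - 1) := fun j _ => by ring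
        rw [prod_congr rfl hh, prod_mul_distrib, prod_const, card_range]
    _ = (-1) ^ K * ∏ j ∈ range K, (ζ ^ (c+1-K+j) - 1) := by
        congr 1
        rw [← prod_range_reflect]
        refine prod_congr rfl fun j hj => ?_
        have hj' := mem_range.mp hj
        rw [show c-(K-1-j) = c+1-K+j from by omega]

lemma choose2 : ∀ k : ℕ, 2 * k.choose 2 + k = k * k := by
  intro k
  induction k with
  | zero => rfl
  | succ k ih =>
      have h1 : (k+1).choose 2 = k.choose 2 + k := by
        rw [Nat.choose_succ_succ, Nat.choose_one_right, Nat.add_comm]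
      have h2 : (k+1)*(k+1) = k*k + 2*k + 1 := by ring
      omega

lemma slem : ∀ (K c : ℕ), K ≤ c + 1 → (∑ j ∈ range K, (c - j)) + K.choose 2 = K * c := by
  intro K
  induction K with
  | zero => intro c _; simp
  | succ K ih =>
      intro c hc
      have h1 : (K+1).choose 2 = K.choose 2 + K := by
        rw [Nat.choose_succ_succ, Nat.choose_one_right, Nat.add_comm]
      have h2 : (K+1)*c = K*c + c := by ring
      have h3 := ih c (by omega)
      rw [sum_range_succ]
      omega

lemma nmulchoose (hn : 1 ≤ n) (C : ℕ) : n * C = (n-1) * C + C := by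
  obtain ⟨m, rfl⟩ : ∃ m, n = m + 1 := ⟨n - 1, by omega⟩
  rw [Nat.add_sub_cancel]; ring

lemma IA (hζ : IsPrimitiveRoot ζ n) (h2 : 2 ≤ n) {k : ℕ} (hk : k < n) :
    (-1)^k * ζ^((n-1) * k.choose 2) * aeval ζ (gbinom (2*k) k)
      = ζ^(k*k+k) * aeval ζ (gbinom (n-1-k) k) := by
  have hznz : ζ ≠ 0 := hζ.ne_zero (by omega)
  have hcD := cD_ne hζ hk
  have h1 : aeval ζ (gbinom (2*k) k) * ∏ j ∈ range k, (ζ^(j+1) - 1)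
      = ∏ j ∈ range k, (ζ^(k+j+1) - 1) := by
    have h := cProd ζ k k
    rw [show k+k = 2*k from by omega] at h
    exact h
  rcases le_or_gt (2*k) (n-1) with hkn | hkn
  · -- main case
    set b := n - 1 - 2*k with hb
    set S := ∑ j ∈ range k, (2*k - j) with hS
    have h2' : aeval ζ (gbinom (n-1-k) k) * ∏ j ∈ range k, (ζ^(j+1) - 1)
        = ∏ j ∈ range k, (ζ^(b+j+1) - 1) := by
      have h := cProd ζ k b
      rw [show k+b = n-1-k from by omega] at h
      exact h
    have h3 : ζ^S * ∏ j ∈ range k, (ζ^(b+j+1) - 1)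
        = (-1)^k * ∏ j ∈ range k, (ζ^(k+j+1) - 1) := by
      rw [zflip hζ k (2*k) b (by omega) (by omega)]
      congr 1
      exact prod_congr rfl fun j hj => by rw [show 2*k+1-k+j = k+j+1 from by omega]
    have hexp : ζ^((n-1) * k.choose 2) * ζ^S = ζ^(k*k+k) := by
      have e0 := slem k (2*k) (by omega)
      have e2 := choose2 k
      have e3 : k * (2*k) = 2*(k*k) := by ring
      have e4 := nmulchoose (by omega : 1 ≤ n) (k.choose 2)
      have e1 : (n-1) * k.choose 2 + S = n * k.choose 2 + (k*k+k) := by omega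
      rw [← pow_add, e1, pow_add, pow_mul, hζ.pow_eq_one, one_pow, one_mul]
    apply mul_right_cancel₀ (mul_ne_zero hcD (pow_ne_zero S hznz))
    linear_combination ((-1:ℂ)^k * ζ^((n-1)*k.choose 2) * ζ^S) * h1
      - (ζ^(k*k+k) * ζ^S) * h2' - ζ^(k*k+k) * h3
      + ((-1:ℂ)^k * (∏ j ∈ range k, (ζ^(k+j+1) - 1))) * hexp
  · -- vanishing case
    have hgz : gbinom (n-1-k) k = 0 := gbinom_big (by omega)
    have hP : (∏ j ∈ range k, (ζ^(k+j+1) - 1)) = 0 := by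
      apply prod_eq_zero (mem_range.mpr (show n-1-k < k by omega))
      rw [show k+(n-1-k)+1 = n from by omega, hζ.pow_eq_one, sub_self]
    have hA0 : aeval ζ (gbinom (2*k) k) = 0 := by
      rcases mul_eq_zero.mp (h1.trans hP) with h | h
      · exact h
      · exact absurd h hcD
    rw [hgz, hA0, map_zero, mul_zero, mul_zero]

lemma IB (hζ : IsPrimitiveRoot ζ n) (h2 : 2 ≤ n) {k : ℕ} (hk : k + 2 ≤ n) :
    (-1)^(k+1) * ζ^((n-1) * k.choose 2 + 1) * aeval ζ (gbinom (2*k) (k+1))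
      = ζ^((k+1)*(k+1)) * aeval ζ (gbinom (n-k) (k+1)) := by
  have hznz : ζ ≠ 0 := hζ.ne_zero (by omega)
  have hcD := cD_ne hζ (show k + 1 < n by omega)
  match k with
  | 0 =>
      have hz1 : gbinom 0 1 = 0 := gbinom_big (by omega)
      have hz2 : aeval ζ (gbinom n 1) = 0 := by
        have h := cProd ζ 1 (n-1)
        rw [show 1+(n-1) = n from by omega] at h
        rw [prod_range_one, prod_range_one, show n-1+0+1 = n from by omega,
          hζ.pow_eq_one, sub_self] at h
        rcases mul_eq_zero.mp h with h | h
        · exact h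
        · exact absurd h (by simpa using cD_ne hζ (show 1 < n by omega))
      rw [show (2*0 : ℕ) = 0 from rfl, hz1, map_zero, mul_zero,
        show (n - 0 : ℕ) = n from rfl, hz2, mul_zero]
  | k+1 =>
    set κ := k + 1 with hκ
    have h1 : aeval ζ (gbinom (2*κ) (κ+1)) * ∏ j ∈ range (κ+1), (ζ^(j+1) - 1)
        = ∏ j ∈ range (κ+1), (ζ^(κ+j) - 1) := by
      have h := cProd ζ (κ+1) (κ-1)
      rw [show κ+1+(κ-1) = 2*κ from by omega] at h
      rw [h]
      exact prod_congr rfl fun j hj => by rw [show κ-1+j+1 = κ+j from by omega]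
    rcases le_or_gt (2*κ+1) n with hkn | hkn
    · set b := n - 2*κ - 1 with hb
      set S := ∑ j ∈ range (κ+1), (2*κ - j) with hS
      have h2' : aeval ζ (gbinom (n-κ) (κ+1)) * ∏ j ∈ range (κ+1), (ζ^(j+1) - 1)
          = ∏ j ∈ range (κ+1), (ζ^(b+j+1) - 1) := by
        have h := cProd ζ (κ+1) b
        rw [show κ+1+b = n-κ from by omega] at h
        exact h
      have h3 : ζ^S * ∏ j ∈ range (κ+1), (ζ^(b+j+1) - 1)
          = (-1)^(κ+1) * ∏ j ∈ range (κ+1), (ζ^(κ+j) - 1) := by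
        rw [zflip hζ (κ+1) (2*κ) b (by omega) (by omega)]
        congr 1
        exact prod_congr rfl fun j hj => by rw [show 2*κ+1-(κ+1)+j = κ+j from by omega]
      have hexp : ζ^((n-1) * κ.choose 2 + 1) * ζ^S = ζ^((κ+1)*(κ+1)) := by
        have e0 := slem (κ+1) (2*κ) (by omega)
        have e2 := choose2 κ
        have e5 : (κ+1).choose 2 = κ.choose 2 + κ := by
          rw [Nat.choose_succ_succ, Nat.choose_one_right, Nat.add_comm]
        have e3 : (κ+1) * (2*κ) = 2*(κ*κ) + 2*κ := by ring
        have e6 : (κ+1)*(κ+1) = κ*κ + 2*κ + 1 := by ring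
        have e4 := nmulchoose (by omega : 1 ≤ n) (κ.choose 2)
        have e1 : ((n-1) * κ.choose 2 + 1) + S = n * κ.choose 2 + (κ+1)*(κ+1) := by omega
        rw [← pow_add, e1, pow_add, pow_mul, hζ.pow_eq_one, one_pow, one_mul]
      apply mul_right_cancel₀ (mul_ne_zero hcD (pow_ne_zero S hznz))
      linear_combination ((-1:ℂ)^(κ+1) * ζ^((n-1) * κ.choose 2 + 1) * ζ^S) * h1
        - (ζ^((κ+1)*(κ+1)) * ζ^S) * h2' - ζ^((κ+1)*(κ+1)) * h3
        + ((-1:ℂ)^(κ+1) * (∏ j ∈ range (κ+1), (ζ^(κ+j) - 1))) * hexp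
    · have hgz : gbinom (n-κ) (κ+1) = 0 := gbinom_big (by omega)
      have hP : (∏ j ∈ range (κ+1), (ζ^(κ+j) - 1)) = 0 := by
        apply prod_eq_zero (mem_range.mpr (show n-κ < κ+1 by omega))
        rw [show κ+(n-κ) = n from by omega, hζ.pow_eq_one, sub_self]
      have hA0 : aeval ζ (gbinom (2*κ) (κ+1)) = 0 := by
        rcases mul_eq_zero.mp (h1.trans hP) with h | h
        · exact h
        · exact absurd h hcD
      rw [hgz, hA0, map_zero, mul_zero, mul_zero]

lemma IC (hζ : IsPrimitiveRoot ζ n) (h2 : 2 ≤ n) :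
    (-1)^(n-1) * ζ^((n-1) * (n-1).choose 2 + 1) * aeval ζ (gbinom (2*(n-1)) n) = 1 := by
  have hznz : ζ ≠ 0 := hζ.ne_zero (by omega)
  have hsym : gbinom (2*(n-1)) n = gbinom (2*(n-1)) (n-2) := by
    have h := gbinom_symm (2*(n-1)) n (by omega)
    rw [show 2*(n-1) - n = n - 2 from by omega] at h
    exact h.symm
  have hval : aeval ζ (gbinom (2*(n-1)) (n-2)) = 1 := by
    have h := cProd ζ (n-2) n
    rw [show n-2+n = 2*(n-1) from by omega] at h
    have hprod : (∏ j ∈ range (n-2), (ζ^(n+j+1) - 1)) = ∏ j ∈ range (n-2), (ζ^(j+1) - 1) := by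
      refine prod_congr rfl fun j hj => ?_
      rw [show n+j+1 = n+(j+1) from by omega, pow_add, hζ.pow_eq_one, one_mul]
    rw [hprod] at h
    have := mul_right_cancel₀ (cD_ne hζ (show n-2 < n by omega)) (h.trans (one_mul _).symm)
    exact this
  rw [hsym, hval, mul_one]
  -- now : (-1)^(n-1) * ζ^E = 1
  obtain ⟨p, rfl⟩ : ∃ p, n = p + 2 := ⟨n - 2, by omega⟩
  have hn1 : p + 2 - 1 = p + 1 := by omega
  rw [hn1]
  set C := (p+1).choose 2 with hC
  set E := (p+1) * C + 1 with hE
  have hc2 := choose2 (p+1)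
  have h2E : 2 * E = (p+2) * (p*p+1) := by
    have e6 : (p+1)*(p+1) = p*p + 2*p + 1 := by ring
    have e7 : 2*((p+1)*C) = (p+1)*(2*C) := by ring
    have e9 : (p+1)*((p+1)*p) + 2 = (p+2)*(p*p+1) := by ring
    have e10 : 2*C = (p+1)*p := by
      have := choose2 (p+1)
      have e11 : (p+1)*p + (p+1) = (p+1)*(p+1) := by ring
      omega
    calc 2 * E = (p+1)*(2*C) + 2 := by rw [hE]; ring
      _ = (p+1)*((p+1)*p) + 2 := by rw [e10]
      _ = (p+2)*(p*p+1) := e9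
  have hsq : ζ^E * ζ^E = 1 := by
    rw [← pow_add, show E + E = 2*E from by ring, h2E, pow_mul, hζ.pow_eq_one, one_pow]
  rcases Nat.even_or_odd p with hp | hp
  · -- p even, n even: ζ^E = -1, (-1)^(n-1) = -1
    have hEneg : ζ^E = -1 := by
      have hfact : (ζ^E - 1) * (ζ^E + 1) = 0 := by linear_combination hsq
      rcases mul_eq_zero.mp hfact with h | h
      · exfalso
        have h1 : ζ^E = 1 := by linear_combination h
        obtain ⟨s, hs⟩ := (hζ.pow_eq_one_iff_dvd E).mp h1
        obtain ⟨q, hq⟩ := hp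
        have hcan : (p+2) * (2*s) = (p+2) * (p*p+1) := by
          rw [← h2E, hs]; ring
        have h2s : 2*s = p*p+1 := Nat.eq_of_mul_eq_mul_left (by omega) hcan
        have hqq : p * p = 2*(2*q*q) := by subst hq; ring
        omega
      · linear_combination h
    obtain ⟨q, hq⟩ := hp
    rw [hEneg, Odd.neg_one_pow ⟨q, by omega⟩]
    norm_num
  · -- p odd: n odd: ζ^E = 1
    obtain ⟨q, hq⟩ := hp
    have hdvd : (p+2) ∣ E := by
      refine ⟨2*q*q + 2*q + 1, ?_⟩
      have hpp : p*p + 1 = 2*(2*q*q+2*q+1) := by rw [hq]; ring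
      have hx : (p+2)*(p*p+1) = 2*((p+2)*(2*q*q+2*q+1)) := by rw [hpp]; ring
      omega
    rw [(hζ.pow_eq_one_iff_dvd E).mpr hdvd, mul_one,
      Even.neg_one_pow (⟨q+1, by omega⟩ : Even (p+1))]

end Root

theorem stmt_16 (n : ℕ) (hn : 0 < n) :
    Polynomial.cyclotomic n ℤ ∣
      ((∑ k ∈ Finset.range n,
          (-1 : Polynomial ℤ) ^ k * Polynomial.X ^ ((n - 1) * k.choose 2) * qCatalan k) -
        (qFibAt Polynomial.X n + qFibAt 1 (n + 2) - 2)) := by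
  rcases Nat.lt_or_ge n 2 with hsm | h2
  · interval_cases n
    have hcalc : (∑ k ∈ Finset.range 1,
          (-1 : Polynomial ℤ) ^ k * Polynomial.X ^ ((1 - 1) * k.choose 2) * qCatalan k)
        - (qFibAt Polynomial.X 1 + qFibAt 1 (1 + 2) - 2) = -(X - 1) := by
      rw [sum_range_one]
      have h0 : qCatalan 0 = 1 := by
        show gbinom (2*0) 0 - X * gbinom (2*0) (0+1) = 1
        rw [gbinom_zero, gbinom_big (show 2*0 < 0+1 by omega)]
        ring
      have h1 : qFibAt X 1 = 1 := rfl
      have h3 : qFibAt (1 : Polynomial ℤ) (1+2) = 1 + X := by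
        show qFibAt (1 : Polynomial ℤ) 2 + X^1 * 1 * qFibAt 1 1 = 1 + X
        show (qFibAt (1 : Polynomial ℤ) 1 + X^0 * 1 * qFibAt 1 0) + X^1 * 1 * qFibAt 1 1 = 1 + X
        show ((1 : Polynomial ℤ) + X^0 * 1 * 0) + X^1 * 1 * 1 = 1 + X
        ring
      rw [h0, h1, h3]
      ring
    rw [hcalc, cyclotomic_one]
    exact ⟨-1, by ring⟩
  · obtain ⟨m, rfl⟩ : ∃ m, n = m + 2 := ⟨n - 2, by omega⟩
    have hζ := Complex.isPrimitiveRoot_exp (m+2) (by omega)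
    set ζ : ℂ := Complex.exp (2 * Real.pi * Complex.I / ((m + 2 : ℕ) : ℂ)) with hzdef
    rw [cyclotomic_eq_minpoly hζ hn]
    apply minpoly.isIntegrallyClosed_dvd (hζ.isIntegral hn)
    rw [show m + 2 - 1 = m + 1 from rfl]
    have h2c : aeval ζ (2 : Polynomial ℤ) = 2 := map_ofNat _ 2
    -- Fibonacci evaluations
    have hAF : aeval ζ (qFibAt X (m+2))
        = ∑ k ∈ range (m+2), ζ^(k*k+k) * aeval ζ (gbinom (m+1-k) k) := by
      rw [show m+2 = (m+1)+1 from rfl, qFib_expand (m+1) X, map_sum]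
      refine sum_congr rfl fun k hk => ?_
      rw [map_mul, map_mul, map_pow, map_pow, aeval_X, ← pow_add]
    have hFn2 : aeval ζ (qFibAt 1 (m+2+2))
        = (∑ k ∈ range (m+1), ζ^((k+1)*(k+1)) * aeval ζ (gbinom (m+2-k) (k+1))) + 1 := by
      rw [show m+2+2 = (m+3)+1 from rfl, qFib_expand (m+3) 1, map_sum]
      have e : ∀ k ∈ range (m+3+1),
          aeval ζ (X^(k*k) * (1 : Polynomial ℤ)^k * gbinom (m+3-k) k)
            = ζ^(k*k) * aeval ζ (gbinom (m+3-k) k) := by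
        intro k _
        rw [map_mul, map_mul, map_pow, map_pow, aeval_X, map_one, one_pow, mul_one]
      rw [sum_congr rfl e]
      rw [sum_range_succ (fun k => ζ^(k*k) * aeval ζ (gbinom (m+3-k) k)) (m+3)]
      rw [show m+3-(m+3) = 0 from by omega, show gbinom 0 (m+3) = 0 from gbinom_big (by omega)]
      rw [sum_range_succ (fun k => ζ^(k*k) * aeval ζ (gbinom (m+3-k) k)) (m+2)]
      rw [show m+3-(m+2) = 1 from by omega, show gbinom 1 (m+2) = 0 from gbinom_big (by omega)]
      have hs := sum_range_succ' (fun k => ζ^(k*k) * aeval ζ (gbinom (m+3-k) k)) (m+1)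
      rw [show m+1+1 = m+2 from rfl] at hs
      rw [hs, show m+3-0 = m+3 from rfl, gbinom_zero]
      simp only [map_zero, mul_zero, add_zero, map_one, Nat.zero_mul, pow_zero, one_mul]
      refine congrArg (· + 1) (sum_congr rfl fun k hk => ?_)
      rw [show m+3-(k+1) = m+2-k from by omega]
    -- termwise
    have hterm : ∀ k ∈ range (m+2),
        aeval ζ ((-1 : Polynomial ℤ) ^ k * X ^ ((m+1) * k.choose 2) * qCatalan k)
          = ζ^(k*k+k) * aeval ζ (gbinom (m+1-k) k)
            + (-1:ℂ)^(k+1) * ζ^((m+1) * k.choose 2 + 1) * aeval ζ (gbinom (2*k) (k+1)) := by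
      intro k hk
      have hk' := mem_range.mp hk
      rw [show qCatalan k = gbinom (2*k) k - X * gbinom (2*k) (k+1) from rfl]
      rw [map_mul, map_mul, map_sub, map_mul, map_pow, map_pow, aeval_X, map_neg, map_one]
      have hIAk := IA hζ (by omega) hk'
      rw [show m + 2 - 1 = m + 1 from rfl] at hIAk
      rw [mul_sub, ← hIAk, pow_succ, pow_succ]
      ring
    rw [map_sub, map_sub, map_add, map_sum]
    rw [sum_congr rfl hterm, sum_add_distrib]
    -- B-sum
    have hICterm : (-1:ℂ)^(m+1+1) * ζ^((m+1) * (m+1).choose 2 + 1) * aeval ζ (gbinom (2*(m+1)) (m+1+1))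
        = -1 := by
      have h := IC hζ (n := m+2) (by omega)
      rw [show m + 2 - 1 = m + 1 from rfl] at h
      rw [show m+1+1 = m+2 from rfl, pow_succ]
      calc (-1:ℂ)^(m+1) * (-1) * (ζ^((m+1) * (m+1).choose 2 + 1)) * aeval ζ (gbinom (2*(m+1)) (m+2))
          = -((-1:ℂ)^(m+1) * ζ^((m+1) * (m+1).choose 2 + 1) * aeval ζ (gbinom (2*(m+1)) (m+2))) := by
            ring
        _ = -1 := by rw [h]
    have hBsum : ∑ k ∈ range (m+2),
          (-1:ℂ)^(k+1) * ζ^((m+1) * k.choose 2 + 1) * aeval ζ (gbinom (2*k) (k+1))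
        = (∑ k ∈ range (m+1), ζ^((k+1)*(k+1)) * aeval ζ (gbinom (m+2-k) (k+1))) + (-1) := by
      have hs := sum_range_succ
        (fun k => (-1:ℂ)^(k+1) * ζ^((m+1) * k.choose 2 + 1) * aeval ζ (gbinom (2*k) (k+1))) (m+1)
      rw [show m+1+1 = m+2 from rfl] at hs
      rw [hs, hICterm]
      refine congrArg (· + (-1)) (sum_congr rfl fun k hk => ?_)
      have hk' := mem_range.mp hk
      have hIBk := IB hζ (n := m+2) (by omega) (k := k) (by omega)
      rw [show m + 2 - 1 = m + 1 from rfl] at hIBk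
      exact hIBk
    rw [hBsum, hAF, hFn2, h2c]
    ring
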